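/- Under the grounded Laplacian setup with n ≥ 2, let 0 < ε < 1/2 and δ₁ = ε/(2n²√(6(n²−1))). Let h̃ = L_F^{-1}𝟏 and suppose h ∈ ℝ^F satisfies ‖h − h̃‖_{L_F} ≤ δ₁ ‖h̃‖_{L_F}. Then for every i ∈ F: (1 − ε/6) h̃_i ≤ h_i ≤ (1 + ε/6) h̃_i; that is, h_i is an (ε/6)-approximation of 𝟏ᵀ L_F^{-1} e_i. -/

import Mathlib

open Matrix Finset

lemma psd_symm' {ι : Type*} [Fintype ι] {M : Matrix ι ι ℝ} (hM : M.IsHermitian)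
    (a b : ι → ℝ) : a ⬝ᵥ (M *ᵥ b) = b ⬝ᵥ (M *ᵥ a) := by
  simp only [dotProduct, Matrix.mulVec, dotProduct, Finset.mul_sum]
  rw [Finset.sum_comm]
  refine Finset.sum_congr rfl fun i _ => Finset.sum_congr rfl fun j _ => ?_
  have h := hM.apply j i
  simp only [star_trivial] at h
  rw [← h]; ring

lemma psd_cs' {ι : Type*} [Fintype ι] {M : Matrix ι ι ℝ} (hM : M.PosSemidef)
    (a b : ι → ℝ) : (a ⬝ᵥ (M *ᵥ b))^2 ≤ (a ⬝ᵥ (M *ᵥ a)) * (b ⬝ᵥ (M *ᵥ b)) := by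
  have key : ∀ t : ℝ, 0 ≤ (b ⬝ᵥ (M *ᵥ b)) * (t * t) + (2 * (a ⬝ᵥ (M *ᵥ b))) * t
      + (a ⬝ᵥ (M *ᵥ a)) := by
    intro t
    have h0 := hM.dotProduct_mulVec_nonneg (a + t • b)
    simp only [star_trivial] at h0
    have hexp : (a + t • b) ⬝ᵥ (M *ᵥ (a + t • b)) =
        (b ⬝ᵥ (M *ᵥ b)) * (t * t) + (2 * (a ⬝ᵥ (M *ᵥ b))) * t + (a ⬝ᵥ (M *ᵥ a)) := by
      simp only [Matrix.mulVec_add, Matrix.mulVec_smul, dotProduct_add,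
        add_dotProduct, smul_dotProduct, dotProduct_smul,
        smul_eq_mul]
      rw [psd_symm' hM.1 b a]
      ring
    linarith [hexp ▸ h0]
  have hd := discrim_le_zero key
  simp only [discrim] at hd
  nlinarith [hd]

lemma sum_ext' {V : Type} [Fintype V] (F : Finset V) (g : V → ℝ)
    (hg : ∀ v ∉ F, g v = 0) : ∑ v, g v = ∑ i : F, g i := by
  rw [Finset.sum_coe_sort F g]
  exact (Finset.sum_subset (Finset.subset_univ F) (fun v _ hv => hg v hv)).symm

lemma ext_quad' {V : Type} [Fintype V] [DecidableEq V] (F : Finset V)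
    (L : Matrix V V ℝ) (x : F → ℝ) :
    x ⬝ᵥ ((L.submatrix (fun i : F => (i:V)) (fun i : F => (i:V))) *ᵥ x)
      = (fun v => if hv : v ∈ F then x ⟨v, hv⟩ else 0) ⬝ᵥ
        (L *ᵥ fun v => if hv : v ∈ F then x ⟨v, hv⟩ else 0) := by
  set xe : V → ℝ := fun v => if hv : v ∈ F then x ⟨v, hv⟩ else 0 with hxe
  have hxe0 : ∀ v ∉ F, xe v = 0 := fun v hv => dif_neg hv
  have hxec : ∀ i : F, xe i = x i := fun i => dif_pos i.2
  simp only [dotProduct, Matrix.mulVec, Matrix.submatrix_apply, dotProduct]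
  rw [sum_ext' F (fun v => xe v * ∑ w, L v w * xe w)
    (fun v hv => by show xe v * _ = 0; rw [hxe0 v hv, zero_mul])]
  refine Finset.sum_congr rfl fun i _ => ?_
  rw [hxec i]
  congr 1
  rw [sum_ext' F (fun w => L i w * xe w) (fun w hw => by show L (i:V) w * xe w = 0; rw [hxe0 w hw, mul_zero])]
  exact Finset.sum_congr rfl fun j _ => by rw [hxec j]

noncomputable def esq' {V : Type} (xe : V → ℝ) : Sym2 V → ℝ :=
  Sym2.lift ⟨fun u v => (xe u - xe v)^2, fun u v => by ring⟩

lemma esq_nonneg' {V : Type} (xe : V → ℝ) (e : Sym2 V) : 0 ≤ esq' xe e := by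
  induction e using Sym2.inductionOn with
  | hf u v => simp only [esq', Sym2.lift_mk]; positivity

lemma walk_sq' {V : Type} {G : SimpleGraph V} (xe : V → ℝ) {a b : V} (p : G.Walk a b) :
    (xe a - xe b)^2 ≤ (p.length : ℝ) * (p.edges.map (esq' xe)).sum := by
  induction p with
  | nil => simp
  | @cons a b' c h q ih =>
    simp only [SimpleGraph.Walk.edges_cons, SimpleGraph.Walk.length_cons, List.map_cons,
      List.sum_cons, esq', Sym2.lift_mk, Nat.cast_add, Nat.cast_one]
    simp only [esq'] at ih
    set d := xe a - xe b' with hd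
    set r := xe b' - xe c with hr
    set S := (q.edges.map (Sym2.lift ⟨fun u v => (xe u - xe v)^2, fun u v => by ring⟩)).sum with hS
    have hS0 : 0 ≤ S := by
      apply List.sum_nonneg
      intro y hy
      obtain ⟨e, _, rfl⟩ := List.mem_map.1 hy
      exact esq_nonneg' xe e
    have hac : xe a - xe c = d + r := by rw [hd, hr]; ring
    rw [hac]
    rcases Nat.eq_zero_or_pos q.length with h0 | h1
    · rw [h0] at ih
      simp only [Nat.cast_zero, zero_mul] at ih
      have hr0 : r = 0 := by nlinarith [sq_nonneg r]
      rw [h0]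
      simp only [Nat.cast_zero, zero_add]
      nlinarith [hS0]
    · have hℓ : (1:ℝ) ≤ (q.length : ℝ) := by exact_mod_cast h1
      nlinarith [sq_nonneg ((q.length : ℝ) * d - r), hS0, ih, hℓ,
        mul_nonneg (sub_nonneg.2 hℓ) hS0]

lemma dart_sum' {V : Type} [Fintype V] [DecidableEq V] {G : SimpleGraph V}
    [DecidableRel G.Adj] (xe : V → ℝ) :
    ∑ d : G.Dart, (xe d.toProd.1 - xe d.toProd.2)^2
      = ∑ i : V, ∑ j : V, if G.Adj i j then (xe i - xe j)^2 else 0 := by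
  rw [← Finset.sum_product']
  rw [show (∑ p ∈ (univ : Finset V) ×ˢ (univ : Finset V),
      if G.Adj p.1 p.2 then (xe p.1 - xe p.2)^2 else 0)
      = ∑ p ∈ ((univ : Finset V) ×ˢ (univ : Finset V)).filter (fun p => G.Adj p.1 p.2),
        (xe p.1 - xe p.2)^2 from (Finset.sum_filter _ _).symm]
  refine Finset.sum_bij (fun d _ => d.toProd) ?_ ?_ ?_ ?_
  · intro d _
    simp only [Finset.mem_filter, Finset.mem_product, Finset.mem_univ, true_and]
    exact d.adj
  · intro d1 _ d2 _ hh
    exact SimpleGraph.Dart.toProd_injective hh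
  · intro p hp
    simp only [Finset.mem_filter] at hp
    exact ⟨⟨p, hp.2⟩, Finset.mem_univ _, rfl⟩
  · intro d _; rfl

lemma trail_sum_le' {V : Type} [Fintype V] [DecidableEq V] {G : SimpleGraph V}
    [DecidableRel G.Adj] (xe : V → ℝ) {a b : V} (p : G.Walk a b)
    (hp : p.edges.Nodup) :
    (p.edges.map (esq' xe)).sum
      ≤ ∑ i : V, ∑ j : V, if G.Adj i j then (xe i - xe j)^2 else 0 := by
  have hedef : p.edges = p.darts.map SimpleGraph.Dart.edge := rfl
  have hdn : p.darts.Nodup := List.Nodup.of_map SimpleGraph.Dart.edge (hedef ▸ hp)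
  have hmap : p.edges.map (esq' xe)
      = p.darts.map (fun d => (xe d.toProd.1 - xe d.toProd.2)^2) := by
    rw [hedef, List.map_map]
    refine List.map_congr_left fun d _ => ?_
    rcases d with ⟨⟨u, v⟩, hadj⟩
    simp [esq', SimpleGraph.Dart.edge]
  rw [hmap, ← dart_sum' xe]
  rw [← List.sum_toFinset _ hdn]
  exact Finset.sum_le_sum_of_subset_of_nonneg (Finset.subset_univ _)
    (fun d _ _ => by positivity)

lemma coord_sq' {V : Type} [Fintype V] [DecidableEq V] {G : SimpleGraph V}
    [DecidableRel G.Adj] (hconn : G.Connected) (F : Finset V) {s : V} (hs : s ∉ F)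
    (x : F → ℝ) (k : F) :
    (x k)^2 ≤ 2 * ((Fintype.card V : ℝ) - 1) *
      (x ⬝ᵥ ((G.lapMatrix ℝ).submatrix (fun i : F => (i:V)) (fun i : F => (i:V)) *ᵥ x)) := by
  set xe : V → ℝ := fun v => if hv : v ∈ F then x ⟨v, hv⟩ else 0 with hxe
  have hform : xe ⬝ᵥ (G.lapMatrix ℝ *ᵥ xe)
      = (∑ i : V, ∑ j : V, if G.Adj i j then (xe i - xe j)^2 else 0) / 2 := by
    rw [← Matrix.toLinearMap₂'_apply', SimpleGraph.lapMatrix_toLinearMap₂']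
  have hQ : x ⬝ᵥ ((G.lapMatrix ℝ).submatrix (fun i : F => (i:V)) (fun i : F => (i:V)) *ᵥ x)
      = xe ⬝ᵥ (G.lapMatrix ℝ *ᵥ xe) := ext_quad' F _ x
  obtain ⟨w⟩ := hconn ((k : V)) s
  set q : G.Walk (k : V) s := w.toPath.1 with hqdef
  have hqpath : q.IsPath := w.toPath.2
  have hlen : (q.length : ℝ) ≤ (Fintype.card V : ℝ) - 1 := by
    have h1 := hqpath.length_lt
    have h2 : q.length + 1 ≤ Fintype.card V := h1
    have := (Nat.cast_le (α := ℝ)).2 h2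
    push_cast at this
    linarith
  have hlen0 : (0:ℝ) ≤ (q.length : ℝ) := Nat.cast_nonneg _
  have h1 := walk_sq' xe q
  have hsum0 : 0 ≤ (q.edges.map (esq' xe)).sum := by
    apply List.sum_nonneg
    intro y hy
    obtain ⟨e, _, rfl⟩ := List.mem_map.1 hy
    exact esq_nonneg' xe e
  have h2 := trail_sum_le' xe q hqpath.isTrail.edges_nodup
  have hxk : xe (k : V) = x k := dif_pos k.2
  have hxs : xe s = 0 := dif_neg hs
  rw [hxk, hxs, sub_zero] at h1
  rw [hQ, hform]
  set D := ∑ i : V, ∑ j : V, if G.Adj i j then (xe i - xe j)^2 else 0 with hD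
  have hD0 : 0 ≤ D := le_trans hsum0 h2
  calc (x k)^2 ≤ (q.length : ℝ) * (q.edges.map (esq' xe)).sum := h1
    _ ≤ ((Fintype.card V : ℝ) - 1) * D := by
        apply mul_le_mul hlen h2 hsum0 (by linarith)
    _ = 2 * ((Fintype.card V : ℝ) - 1) * (D / 2) := by ring

set_option maxHeartbeats 2000000 in
/-- Under the grounded Laplacian setup with `n ≥ 2`, let `0 < ε < 1/2` and
`δ₁ = ε/(2n²√(6(n²−1)))`.  Let `h̃ = L_F⁻¹ 𝟏` and suppose `h` satisfies
`‖h − h̃‖_{L_F} ≤ δ₁ ‖h̃‖_{L_F}`.  Then for every `i ∈ F`: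
`(1 − ε/6) h̃ᵢ ≤ hᵢ ≤ (1 + ε/6) h̃ᵢ`, i.e. `hᵢ` is an `(ε/6)`-approximation of
`𝟏ᵀ L_F⁻¹ eᵢ`. -/
theorem stmt11 {V : Type} [Fintype V] [DecidableEq V]
    (G : SimpleGraph V) [DecidableRel G.Adj] (hconn : G.Connected)
    (F S0 S1 : Finset V)
    (hFne : F.Nonempty) (hS1ne : S1.Nonempty)
    (hFS0 : Disjoint F S0) (hFS1 : Disjoint F S1) (hS0S1 : Disjoint S0 S1)
    (hcover : F ∪ S0 ∪ S1 = Finset.univ)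
    (n : ℕ) (hn : n = Fintype.card V) (hn2 : 2 ≤ n)
    (LF : Matrix F F ℝ)
    (hLF : LF = (G.lapMatrix ℝ).submatrix (fun i : F => (i : V)) (fun i : F => (i : V)))
    (hPD : LF.PosDef) (hnn : ∀ i j : F, 0 ≤ LF⁻¹ i j)
    (ε : ℝ) (hε0 : 0 < ε) (hε : ε < 1 / 2)
    (δ₁ : ℝ) (hδ₁ : δ₁ = ε / (2 * (n : ℝ) ^ 2 * Real.sqrt (6 * ((n : ℝ) ^ 2 - 1))))
    (ht : F → ℝ) (hht : ht = LF⁻¹ *ᵥ (1 : F → ℝ))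
    (h : F → ℝ)
    (hsolve : Real.sqrt ((h - ht) ⬝ᵥ (LF *ᵥ (h - ht)))
        ≤ δ₁ * Real.sqrt (ht ⬝ᵥ (LF *ᵥ ht))) :
    ∀ i : F, (1 - ε / 6) * ht i ≤ h i ∧ h i ≤ (1 + ε / 6) * ht i := by
  intro i
  classical
  set N : ℝ := (n : ℝ) with hN
  have hN2 : (2:ℝ) ≤ N := by rw [hN]; exact_mod_cast hn2
  -- basic matrix facts
  have hdet : IsUnit LF.det := hPD.det_pos.ne'.isUnit
  have hinv2 : LF * LF⁻¹ = 1 := Matrix.mul_nonsing_inv LF hdet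
  have hpsd : LF.PosSemidef := hPD.posSemidef
  have hinvpsd : (LF⁻¹).PosSemidef := hPD.inv.posSemidef
  -- coordinate bound
  obtain ⟨s, hsS1⟩ := hS1ne
  have hsF : s ∉ F := fun hsf => (Finset.disjoint_left.1 hFS1) hsf hsS1
  have KB : ∀ (y : F → ℝ) (k : F), (y k)^2 ≤ 2*(N-1) * (y ⬝ᵥ (LF *ᵥ y)) := by
    intro y k
    have := coord_sq' hconn F hsF y k
    rw [← hLF] at this
    rw [hN, hn]
    exact this
  -- diagonal entries of LF⁻¹ are at most 2(N-1)
  have hRle : ∀ k : F, LF⁻¹ k k ≤ 2*(N-1) := by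
    intro k
    set y : F → ℝ := LF⁻¹ *ᵥ Pi.single k 1 with hy
    have hyk : y k = LF⁻¹ k k := by
      rw [hy, Matrix.mulVec_single]
      simp
    have hLFy : LF *ᵥ y = Pi.single k 1 := by
      rw [hy, Matrix.mulVec_mulVec, hinv2, Matrix.one_mulVec]
    have hquad : y ⬝ᵥ (LF *ᵥ y) = y k := by
      rw [hLFy, dotProduct_single, mul_one]
    have hKB := KB y k
    rw [hquad, hyk] at hKB
    have hyk0 : 0 ≤ LF⁻¹ k k := hnn k k
    nlinarith [hKB, hyk0, hN2]
  -- all entries of LF⁻¹ are at most 2(N-1)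
  have hEle : ∀ j k : F, LF⁻¹ j k ≤ 2*(N-1) := by
    intro j k
    have hcs := psd_cs' hinvpsd (Pi.single j 1) (Pi.single k 1)
    have e1 : (Pi.single j 1 : F → ℝ) ⬝ᵥ (LF⁻¹ *ᵥ Pi.single k 1) = LF⁻¹ j k := by
      rw [single_dotProduct, Matrix.mulVec_single]
      simp
    have e2 : (Pi.single j 1 : F → ℝ) ⬝ᵥ (LF⁻¹ *ᵥ Pi.single j 1) = LF⁻¹ j j := by
      rw [single_dotProduct, Matrix.mulVec_single]
      simp
    have e3 : (Pi.single k 1 : F → ℝ) ⬝ᵥ (LF⁻¹ *ᵥ Pi.single k 1) = LF⁻¹ k k := by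
      rw [single_dotProduct, Matrix.mulVec_single]
      simp
    rw [e1, e2, e3] at hcs
    nlinarith [hcs, hRle j, hRle k, hnn j k, hnn j j, hnn k k, hN2]
  -- ht values
  have hhtval : ∀ j : F, ht j = ∑ k : F, LF⁻¹ j k := by
    intro j
    rw [hht]
    simp [Matrix.mulVec, dotProduct]
  have hcardF : (F.card : ℝ) ≤ N - 1 := by
    have hsub : F ∪ S1 ⊆ Finset.univ := Finset.subset_univ _
    have hcardle : F.card + S1.card ≤ Fintype.card V := by
      rw [← Finset.card_union_of_disjoint hFS1]
      exact le_trans (Finset.card_le_univ _) (le_of_eq (Finset.card_univ))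
    have hS1card : 1 ≤ S1.card := Finset.card_pos.2 ⟨s, hsS1⟩
    have hFn : F.card + 1 ≤ n := by omega
    have h' := (Nat.cast_le (α := ℝ)).2 hFn
    push_cast at h'
    rw [hN]
    linarith
  have hhtub : ∀ j : F, ht j ≤ 2*(N-1)^2 := by
    intro j
    rw [hhtval j]
    calc ∑ k : F, LF⁻¹ j k ≤ ∑ _k : F, 2*(N-1) :=
          Finset.sum_le_sum (fun k _ => hEle j k)
      _ = (F.card : ℝ) * (2*(N-1)) := by
          rw [Finset.sum_const, Finset.card_univ]
          simp [Fintype.card_coe, nsmul_eq_mul]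
      _ ≤ (N-1) * (2*(N-1)) := by nlinarith [hcardF, hN2]
      _ = 2*(N-1)^2 := by ring
  -- quadratic form of ht
  have hLFht : LF *ᵥ ht = (1 : F → ℝ) := by
    rw [hht, Matrix.mulVec_mulVec, hinv2, Matrix.one_mulVec]
  have hQht : ht ⬝ᵥ (LF *ᵥ ht) = ∑ j : F, ht j := by
    rw [hLFht, dotProduct_one]
  have hQhtub : ht ⬝ᵥ (LF *ᵥ ht) ≤ 2*(N-1)^3 := by
    rw [hQht]
    calc ∑ j : F, ht j ≤ ∑ _j : F, 2*(N-1)^2 :=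
          Finset.sum_le_sum (fun j _ => hhtub j)
      _ = (F.card : ℝ) * (2*(N-1)^2) := by
          rw [Finset.sum_const, Finset.card_univ]
          simp [Fintype.card_coe, nsmul_eq_mul]
      _ ≤ (N-1) * (2*(N-1)^2) := by nlinarith [hcardF, hN2]
      _ = 2*(N-1)^3 := by ring
  -- Rii ≤ ht i
  have hRii_le : LF⁻¹ i i ≤ ht i := by
    rw [hhtval i]
    exact Finset.single_le_sum (fun k _ => hnn i k) (Finset.mem_univ i)
  -- key vector a = LF⁻¹ *ᵥ e_i
  set a : F → ℝ := LF⁻¹ *ᵥ Pi.single i 1 with ha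
  have hLFa : LF *ᵥ a = Pi.single i 1 := by
    rw [ha, Matrix.mulVec_mulVec, hinv2, Matrix.one_mulVec]
  have haa : a ⬝ᵥ (LF *ᵥ a) = LF⁻¹ i i := by
    rw [hLFa, dotProduct_single, mul_one, ha, Matrix.mulVec_single]
    simp
  -- 1 ≤ N * ht i
  have hLFii : LF i i ≤ N := by
    rw [hLF]
    simp only [Matrix.submatrix_apply]
    rw [SimpleGraph.lapMatrix]
    simp only [Matrix.sub_apply, SimpleGraph.degMatrix, Matrix.diagonal_apply_eq,
      SimpleGraph.adjMatrix_apply, if_neg (G.irrefl), sub_zero]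
    have := G.degree_lt_card_verts (i : V)
    have h1 : (G.degree (i : V) : ℝ) ≤ (Fintype.card V : ℝ) := by exact_mod_cast this.le
    rw [hN, hn]
    exact h1
  have hone : (1:ℝ) ≤ LF⁻¹ i i * LF i i := by
    have hcs := psd_cs' hpsd a (Pi.single i 1)
    have e1 : a ⬝ᵥ (LF *ᵥ Pi.single i 1) = 1 := by
      rw [psd_symm' hpsd.1 a (Pi.single i 1), hLFa, single_dotProduct]
      simp
    have e2 : (Pi.single i 1 : F → ℝ) ⬝ᵥ (LF *ᵥ Pi.single i 1) = LF i i := by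
      rw [single_dotProduct, Matrix.mulVec_single]
      simp
    rw [e1, e2, haa] at hcs
    nlinarith [hcs]
  have hRii0 : 0 ≤ LF⁻¹ i i := hnn i i
  have hNhti : (1:ℝ) ≤ N * ht i := by
    have h1 : (1:ℝ) ≤ LF⁻¹ i i * N := by nlinarith [hone, hLFii, hRii0]
    nlinarith [h1, hRii_le, hN2]
  have hNpos : (0:ℝ) < N := by linarith
  have hti0 : 0 < ht i := by
    by_contra hc
    push_neg at hc
    nlinarith [mul_nonneg hNpos.le (neg_nonneg.2 hc)]
  -- Qv ≤ δ₁² * Qht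
  set v : F → ℝ := h - ht with hv
  have hQv0 : 0 ≤ v ⬝ᵥ (LF *ᵥ v) := by
    have := hpsd.dotProduct_mulVec_nonneg v
    simpa [star_trivial] using this
  have hQht0 : 0 ≤ ht ⬝ᵥ (LF *ᵥ ht) := by
    have := hpsd.dotProduct_mulVec_nonneg ht
    simpa [star_trivial] using this
  have hδ₁0 : 0 ≤ δ₁ := by
    rw [hδ₁]
    apply div_nonneg hε0.le
    positivity
  have hQv_le : v ⬝ᵥ (LF *ᵥ v) ≤ δ₁^2 * (ht ⬝ᵥ (LF *ᵥ ht)) := by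
    have h1 : Real.sqrt (v ⬝ᵥ (LF *ᵥ v)) ≤ δ₁ * Real.sqrt (ht ⬝ᵥ (LF *ᵥ ht)) := hsolve
    have h2 := mul_self_le_mul_self (Real.sqrt_nonneg (v ⬝ᵥ (LF *ᵥ v))) h1
    rw [Real.mul_self_sqrt hQv0] at h2
    calc v ⬝ᵥ (LF *ᵥ v) ≤ (δ₁ * Real.sqrt (ht ⬝ᵥ (LF *ᵥ ht))) *
          (δ₁ * Real.sqrt (ht ⬝ᵥ (LF *ᵥ ht))) := h2
      _ = δ₁^2 * (Real.sqrt (ht ⬝ᵥ (LF *ᵥ ht)) * Real.sqrt (ht ⬝ᵥ (LF *ᵥ ht))) := by ring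
      _ = δ₁^2 * (ht ⬝ᵥ (LF *ᵥ ht)) := by rw [Real.mul_self_sqrt hQht0]
  -- (v i)² ≤ Rii * Qv
  have hvi_sq : (v i)^2 ≤ LF⁻¹ i i * (v ⬝ᵥ (LF *ᵥ v)) := by
    have hcs := psd_cs' hpsd a v
    have e1 : a ⬝ᵥ (LF *ᵥ v) = v i := by
      rw [psd_symm' hpsd.1 a v, hLFa, dotProduct_single, mul_one]
    rw [e1, haa] at hcs
    exact hcs
  -- δ₁² * 24 N⁴ (N²-1) = ε²
  have hsq6 : Real.sqrt (6 * (N^2 - 1)) ^ 2 = 6 * (N^2 - 1) := by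
    rw [Real.sq_sqrt]; nlinarith [hN2]
  have hDpos : 0 < 2 * N^2 * Real.sqrt (6 * (N^2 - 1)) := by
    have : 0 < Real.sqrt (6 * (N^2 - 1)) := Real.sqrt_pos.2 (by nlinarith [hN2])
    positivity
  have hεδ : ε = δ₁ * (2 * N^2 * Real.sqrt (6 * (N^2 - 1))) := by
    rw [hδ₁, div_mul_cancel₀ _ hDpos.ne']
  have hε2 : ε^2 = δ₁^2 * (24 * N^4 * (N^2 - 1)) := by
    rw [hεδ]
    have : (δ₁ * (2 * N^2 * Real.sqrt (6 * (N^2 - 1))))^2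
        = δ₁^2 * (4 * N^4 * (Real.sqrt (6 * (N^2 - 1)))^2) := by ring
    rw [this, hsq6]
    ring
  -- main chain
  have hmain : (v i)^2 ≤ δ₁^2 * (2*(N-1)^3) * N * (ht i)^2 := by
    have c1 : (v i)^2 ≤ ht i * (v ⬝ᵥ (LF *ᵥ v)) := by
      calc (v i)^2 ≤ LF⁻¹ i i * (v ⬝ᵥ (LF *ᵥ v)) := hvi_sq
        _ ≤ ht i * (v ⬝ᵥ (LF *ᵥ v)) := mul_le_mul_of_nonneg_right hRii_le hQv0
    have c2 : ht i * (v ⬝ᵥ (LF *ᵥ v)) ≤ ht i * (δ₁^2 * (ht ⬝ᵥ (LF *ᵥ ht))) :=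
      mul_le_mul_of_nonneg_left hQv_le hti0.le
    have c3 : ht i * (δ₁^2 * (ht ⬝ᵥ (LF *ᵥ ht))) ≤ ht i * (δ₁^2 * (2*(N-1)^3)) := by
      apply mul_le_mul_of_nonneg_left _ hti0.le
      exact mul_le_mul_of_nonneg_left hQhtub (by positivity)
    have c4 : ht i * (δ₁^2 * (2*(N-1)^3)) ≤ (N * ht i * ht i) * (δ₁^2 * (2*(N-1)^3)) := by
      apply mul_le_mul_of_nonneg_right _
        (mul_nonneg (sq_nonneg δ₁) (by nlinarith [hN2]))
      nlinarith [hNhti, hti0]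
    calc (v i)^2 ≤ ht i * (v ⬝ᵥ (LF *ᵥ v)) := c1
      _ ≤ ht i * (δ₁^2 * (ht ⬝ᵥ (LF *ᵥ ht))) := c2
      _ ≤ ht i * (δ₁^2 * (2*(N-1)^3)) := c3
      _ ≤ (N * ht i * ht i) * (δ₁^2 * (2*(N-1)^3)) := c4
      _ = δ₁^2 * (2*(N-1)^3) * N * (ht i)^2 := by ring
  have hpoly : δ₁^2 * (2*(N-1)^3) * N * 36 ≤ ε^2 := by
    rw [hε2]
    have hkey : 3*(N-1)^2 ≤ N^3*(N+1) := by nlinarith [hN2]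
    have hprod : 0 ≤ 24*N*(N-1) * (N^3*(N+1) - 3*(N-1)^2) := by
      apply mul_nonneg
      · nlinarith [hN2]
      · linarith
    have hexpand : δ₁^2 * (24 * N^4 * (N^2-1)) - δ₁^2 * (2*(N-1)^3) * N * 36
        = δ₁^2 * (24*N*(N-1) * (N^3*(N+1) - 3*(N-1)^2)) := by ring
    linarith only [mul_nonneg (sq_nonneg δ₁) hprod, hexpand]
  have hfinal : (v i)^2 ≤ (ε/6 * ht i)^2 := by
    have heq : (ε/6 * ht i)^2 = ε^2 * (ht i)^2 / 36 := by ring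
    rw [heq]
    have h36 := mul_le_mul_of_nonneg_right hpoly (sq_nonneg (ht i))
    linarith only [hmain, h36]
  have hεht0 : 0 ≤ ε/6 * ht i := mul_nonneg (by linarith) hti0.le
  have habs := abs_le_of_sq_le_sq' hfinal hεht0
  have hvi_eq : v i = h i - ht i := by rw [hv]; simp
  rw [hvi_eq] at habs
  constructor
  · linarith [habs.1]
  · linarith [habs.2]
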